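/- Let E be an asymptotically compact evolutionary system and A ⊆ X a set for which some trajectory u ∈ E([0,∞)) has u(0) ∈ A. Then ω_s(A) is a nonempty strongly compact set that uniformly strongly attracts A, and ω_s(A) = ω_w(A). -/

import Mathlib

open Set Filter Topology

/-- The topology induced by a metric structure `m` on `X`. -/
def mtop {X : Type*} (m : MetricSpace X) : TopologicalSpace X :=
  m.toPseudoMetricSpace.toUniformSpace.toTopologicalSpace

/-- An evolutionary system: for each `T : ℝ`, `E T` is the set of trajectories on `[T, ∞)`
(modeled as functions `ℝ → X`), with translation and restriction properties. -/
structure EvolSys (X : Type*) where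
  E : ℝ → Set (ℝ → X)
  nonempty : (E 0).Nonempty
  translate : ∀ T s : ℝ, E (T + s) = {u | (fun t => u (t + s)) ∈ E T}
  restrict : ∀ T T' : ℝ, T ≤ T' → E T ⊆ E T'

/-- Complete trajectories. -/
def EvolSys.Einf {X : Type*} (ES : EvolSys X) : Set (ℝ → X) := {u | ∀ T : ℝ, u ∈ ES.E T}

/-- `R t A = {u t : u 0 ∈ A, u ∈ E([0,∞))}`. -/
def EvolSys.R {X : Type*} (ES : EvolSys X) (t : ℝ) (A : Set X) : Set X :=
  {x | ∃ u ∈ ES.E 0, u 0 ∈ A ∧ u t = x}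

/-- `R̃ t A = {u t : u 0 ∈ A, u ∈ E((-∞,∞))}`. -/
def EvolSys.Rt {X : Type*} (ES : EvolSys X) (t : ℝ) (A : Set X) : Set X :=
  {x | ∃ u ∈ ES.Einf, u 0 ∈ A ∧ u t = x}

/-- The omega-limit of `A` with respect to the metric `m`. -/
def omegaLim {X : Type*} (m : MetricSpace X) (ES : EvolSys X) (A : Set X) : Set X :=
  ⋂ T ∈ Ici (0:ℝ), @closure X (mtop m) (⋃ t ∈ Ici T, ES.R t A)

/-- `P` uniformly attracts `A` in the metric `m`. -/
def attracts {X : Type*} (m : MetricSpace X) (ES : EvolSys X) (P A : Set X) : Prop :=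
  ∀ ε > (0:ℝ), ∃ t₀ : ℝ, ∀ t ≥ t₀, ∀ x ∈ ES.R t A, ∃ p ∈ P, m.dist x p < ε

/-- `P` is an attracting set in the metric `m`. -/
def isAttracting {X : Type*} (m : MetricSpace X) (ES : EvolSys X) (P : Set X) : Prop :=
  attracts m ES P univ

/-- A global attractor in metric `m`: a minimal closed attracting set. -/
def isGlobalAttractor {X : Type*} (m : MetricSpace X) (ES : EvolSys X) (A : Set X) : Prop :=
  @IsClosed X (mtop m) A ∧ isAttracting m ES A ∧
    ∀ B ⊆ A, @IsClosed X (mtop m) B → isAttracting m ES B → B = A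

/-- Asymptotic compactness with respect to the strong metric `ms`. -/
def asympCompact {X : Type*} (ms : MetricSpace X) (ES : EvolSys X) : Prop :=
  ∀ (t : ℕ → ℝ) (x : ℕ → X), Tendsto t atTop atTop →
    (∀ n, x n ∈ ES.R (t n) univ) →
    ∃ (φ : ℕ → ℕ) (y : X), StrictMono φ ∧
      Tendsto (fun n => ms.dist (x (φ n)) y) atTop (𝓝 0)

/-- Quasi-invariance of `A`: through every point of `A` passes a complete trajectory
lying in `A`. -/
def quasiInvariant {X : Type*} (ES : EvolSys X) (A : Set X) : Prop :=
  ∀ a ∈ A, ∃ u ∈ ES.Einf, u 0 = a ∧ ∀ t : ℝ, u t ∈ A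

/-- Condition A1: `E([0,∞))` is (sequentially) compact in `C([0,∞); X_w)`, i.e. every
sequence of trajectories has a subsequence converging, uniformly in `d_w` on every
compact subinterval of `[0,∞)`, to a trajectory. -/
def A1cond {X : Type*} (mw : MetricSpace X) (ES : EvolSys X) : Prop :=
  ∀ u : ℕ → ℝ → X, (∀ n, u n ∈ ES.E 0) →
    ∃ (φ : ℕ → ℕ) (v : ℝ → X), StrictMono φ ∧ v ∈ ES.E 0 ∧
      ∀ T > (0:ℝ), ∀ ε > (0:ℝ), ∃ N : ℕ, ∀ n ≥ N, ∀ s ∈ Icc (0:ℝ) T,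
        mw.dist (u (φ n) s) (v s) < ε

/-- The metric of `C([a,∞); X_w)`. -/
noncomputable def dC {X : Type*} (mw : MetricSpace X) (a : ℝ) (u v : ℝ → X) : ℝ :=
  ∑' T : ℕ, (1/2 : ℝ)^T *
    (sSup ((fun t => mw.dist (u t) (v t)) '' Icc a (a + T)) /
     (1 + sSup ((fun t => mw.dist (u t) (v t)) '' Icc a (a + T))))

section Helpers

variable {X : Type*}

lemma mdist_nonneg (m : MetricSpace X) (a b : X) : 0 ≤ m.dist a b := by
  letI := m; exact dist_nonneg

lemma mdist_comm (m : MetricSpace X) (a b : X) : m.dist a b = m.dist b a := by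
  letI := m; exact dist_comm a b

lemma mdist_triangle (m : MetricSpace X) (a b c : X) :
    m.dist a c ≤ m.dist a b + m.dist b c := by
  letI := m; exact dist_triangle a b c

lemma meq_of_forall_dist_lt (m : MetricSpace X) (a b : X)
    (h : ∀ ε > (0:ℝ), m.dist a b < ε) : a = b := by
  letI := m
  by_contra hne
  exact absurd (h _ (dist_pos.2 hne)) (lt_irrefl _)

lemma mem_mclosure_iff (m : MetricSpace X) (S : Set X) (x : X) :
    x ∈ @closure X (mtop m) S ↔ ∀ ε > (0:ℝ), ∃ y ∈ S, m.dist x y < ε := by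
  letI := m
  exact Metric.mem_closure_iff

lemma mem_omega (m : MetricSpace X) (ES : EvolSys X) (A : Set X)
    (t : ℕ → ℝ) (ht : Tendsto t atTop atTop)
    (y : ℕ → X) (hy : ∀ n, y n ∈ ES.R (t n) A)
    (z : X) (hz : Tendsto (fun n => m.dist (y n) z) atTop (𝓝 0)) :
    z ∈ omegaLim m ES A := by
  rw [omegaLim]
  simp only [mem_iInter]
  intro T _
  rw [mem_mclosure_iff]
  intro ε hε
  have h1 : ∀ᶠ n in atTop, T ≤ t n := ht.eventually_ge_atTop T
  have h2 : ∀ᶠ n in atTop, m.dist (y n) z < ε := hz (Iio_mem_nhds hε)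
  obtain ⟨n, hn1, hn2⟩ := (h1.and h2).exists
  refine ⟨y n, ?_, ?_⟩
  · exact mem_iUnion₂.2 ⟨t n, mem_Ici.2 hn1, hy n⟩
  · rw [mdist_comm]; exact hn2

lemma limit_point (ms : MetricSpace X) (ES : EvolSys X) (hac : asympCompact ms ES)
    (A : Set X) (t : ℕ → ℝ) (ht : Tendsto t atTop atTop)
    (x : ℕ → X) (hx : ∀ n, x n ∈ ES.R (t n) A) :
    ∃ z ∈ omegaLim ms ES A, ∃ φ : ℕ → ℕ, StrictMono φ ∧
      Tendsto (fun n => ms.dist (x (φ n)) z) atTop (𝓝 0) := by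
  obtain ⟨φ, z, hφ, hz⟩ := hac t x ht (fun n => by
    obtain ⟨u, hu, _, hut⟩ := hx n
    exact ⟨u, hu, mem_univ _, hut⟩)
  refine ⟨z, ?_, φ, hφ, hz⟩
  exact mem_omega ms ES A (t ∘ φ) (ht.comp hφ.tendsto_atTop)
    (x ∘ φ) (fun n => hx (φ n)) z hz

end Helpers

theorem stmt10 {X : Type*} (ms mw : MetricSpace X) (ES : EvolSys X)
    (hXw : @IsCompact X (mtop mw) Set.univ)
    (hsw : ∀ u v : ℕ → X,
      Tendsto (fun n => ms.dist (u n) (v n)) atTop (𝓝 0) →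
      Tendsto (fun n => mw.dist (u n) (v n)) atTop (𝓝 0))
    (hac : asympCompact ms ES)
    (A : Set X) (hA : ∃ u ∈ ES.E 0, u 0 ∈ A) :
    (omegaLim ms ES A).Nonempty ∧
    @IsCompact X (mtop ms) (omegaLim ms ES A) ∧
    attracts ms ES (omegaLim ms ES A) A ∧
    omegaLim ms ES A = omegaLim mw ES A := by
  have hnat : Tendsto (fun n : ℕ => (n : ℝ)) atTop atTop := tendsto_natCast_atTop_atTop
  refine ⟨?_, ?_, ?_, ?_⟩
  · -- Nonempty
    obtain ⟨u, hu, hu0⟩ := hA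
    obtain ⟨z0, hz0, -⟩ := limit_point ms ES hac A (fun n : ℕ => (n : ℝ)) hnat
      (fun n => u n) (fun n => ⟨u, hu, hu0, rfl⟩)
    exact ⟨z0, hz0⟩
  · -- Compact
    letI := ms
    change IsCompact (omegaLim ms ES A)
    apply IsSeqCompact.isCompact
    intro x hx
    have key : ∀ n : ℕ, ∃ y, (∃ t ≥ (n : ℝ), y ∈ ES.R t A) ∧
        ms.dist (x n) y < 1 / ((n : ℝ) + 1) := by
      intro n
      have hxn := hx n
      simp only [omegaLim, mem_iInter] at hxn
      have h1 := (mem_mclosure_iff ms _ _).1 (hxn (n : ℝ) (mem_Ici.2 n.cast_nonneg))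
        (1 / ((n : ℝ) + 1)) (by positivity)
      obtain ⟨y, hyU, hyd⟩ := h1
      obtain ⟨t, htI, hyR⟩ := mem_iUnion₂.1 hyU
      exact ⟨y, ⟨t, mem_Ici.1 htI, hyR⟩, hyd⟩
    choose y hy hyd using key
    choose t ht hty using hy
    obtain ⟨z, hzω, φ, hφ, hzd⟩ := limit_point ms ES hac A t
      (tendsto_atTop_mono ht hnat) y hty
    refine ⟨z, hzω, φ, hφ, ?_⟩
    rw [tendsto_iff_dist_tendsto_zero]
    have hlim : Tendsto (fun n : ℕ => 1 / ((n : ℝ) + 1) + ms.dist (y (φ n)) z)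
        atTop (𝓝 0) := by
      have := tendsto_one_div_add_atTop_nhds_zero_nat.add hzd
      simpa using this
    apply squeeze_zero (fun n => mdist_nonneg ms _ _) (fun n => ?_) hlim
    calc ms.dist (x (φ n)) z
        ≤ ms.dist (x (φ n)) (y (φ n)) + ms.dist (y (φ n)) z := mdist_triangle ms _ _ _
      _ ≤ 1 / ((n : ℝ) + 1) + ms.dist (y (φ n)) z := by
          gcongr
          calc ms.dist (x (φ n)) (y (φ n)) ≤ 1 / ((φ n : ℝ) + 1) := (hyd (φ n)).le
            _ ≤ 1 / ((n : ℝ) + 1) := one_div_le_one_div_of_le (by positivity)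
                (by have : (n : ℝ) ≤ (φ n : ℝ) := Nat.cast_le.2 hφ.le_apply; linarith)
  · -- Attracts
    by_contra hcon
    rw [attracts] at hcon
    push_neg at hcon
    obtain ⟨ε, hε, h⟩ := hcon
    choose t ht x hx hd using fun n : ℕ => h (n : ℝ)
    obtain ⟨z, hzω, φ, hφ, hzd⟩ := limit_point ms ES hac A t
      (tendsto_atTop_mono ht hnat) x hx
    have h0 : ε ≤ 0 := ge_of_tendsto hzd (Eventually.of_forall fun n => hd (φ n) z hzω)
    linarith
  · -- ω_s = ω_w
    apply Set.Subset.antisymm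
    · intro w hw
      simp only [omegaLim, mem_iInter] at hw ⊢
      intro T hT
      rw [mem_mclosure_iff]
      intro ε hε
      have hwT := (mem_mclosure_iff ms _ _).1 (hw T hT)
      choose y hyS hyd using fun n : ℕ => hwT (1 / ((n : ℝ) + 1)) (by positivity)
      have h1 : Tendsto (fun n => ms.dist (y n) w) atTop (𝓝 0) := by
        apply squeeze_zero (fun n => mdist_nonneg ms _ _) (fun n => ?_)
          tendsto_one_div_add_atTop_nhds_zero_nat
        have := (hyd n).le
        rw [mdist_comm ms w (y n)] at this
        exact this
      have h2 := hsw y (fun _ => w) h1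
      have h3 : ∀ᶠ n : ℕ in atTop, mw.dist (y n) w < ε := h2 (Iio_mem_nhds hε)
      obtain ⟨n, hn⟩ := h3.exists
      refine ⟨y n, hyS n, ?_⟩
      rw [mdist_comm mw w (y n)]
      exact hn
    · intro w hw
      simp only [omegaLim, mem_iInter] at hw
      have key : ∀ n : ℕ, ∃ y, (∃ t ≥ (n : ℝ), y ∈ ES.R t A) ∧
          mw.dist w y < 1 / ((n : ℝ) + 1) := by
        intro n
        have h1 := (mem_mclosure_iff mw _ _).1 (hw (n : ℝ) (mem_Ici.2 n.cast_nonneg))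
          (1 / ((n : ℝ) + 1)) (by positivity)
        obtain ⟨y, hyU, hyd⟩ := h1
        obtain ⟨t, htI, hyR⟩ := mem_iUnion₂.1 hyU
        exact ⟨y, ⟨t, mem_Ici.1 htI, hyR⟩, hyd⟩
      choose y hy hyd using key
      choose t ht hty using hy
      obtain ⟨z, hzω, φ, hφ, hzd⟩ := limit_point ms ES hac A t
        (tendsto_atTop_mono ht hnat) y hty
      have hweak := hsw (fun n => y (φ n)) (fun _ => z) hzd
      have hwz : w = z := by
        apply meq_of_forall_dist_lt mw
        intro ε hε
        have e1 : ∀ᶠ n : ℕ in atTop, mw.dist w (y (φ n)) < ε / 2 := by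
          filter_upwards [tendsto_one_div_add_atTop_nhds_zero_nat
            (Iio_mem_nhds (half_pos hε))] with n hn
          calc mw.dist w (y (φ n)) < 1 / ((φ n : ℝ) + 1) := hyd (φ n)
            _ ≤ 1 / ((n : ℝ) + 1) := one_div_le_one_div_of_le (by positivity)
                (by have : (n : ℝ) ≤ (φ n : ℝ) := Nat.cast_le.2 hφ.le_apply; linarith)
            _ < ε / 2 := hn
        have e2 : ∀ᶠ n : ℕ in atTop, mw.dist (y (φ n)) z < ε / 2 :=
          hweak (Iio_mem_nhds (half_pos hε))

        obtain ⟨n, hn1, hn2⟩ := (e1.and e2).exists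
        calc mw.dist w z ≤ mw.dist w (y (φ n)) + mw.dist (y (φ n)) z :=
              mdist_triangle mw _ _ _
          _ < ε := by linarith
      rw [hwz]
      exact hzω
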